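/- For every k > 1, the maximal range over all stamp chains of cardinality k equals 2 plus the maximal range over all stamp bases of cardinality k−1, i.e., n̄(k) = n(k−1) + 2. -/

import Mathlib

/-- `A` generates `c` if `c` is an element or a sum of two (possibly equal) elements. -/
def Generates (A : Finset ℕ) (c : ℕ) : Prop :=
  c ∈ A ∨ ∃ a ∈ A, ∃ b ∈ A, c = a + b

/-- `A` generates every integer in `[1, n]`, i.e. `A` is a stamp basis for `n`. -/
def GeneratesUpTo (A : Finset ℕ) (n : ℕ) : Prop :=
  ∀ c, 1 ≤ c → c ≤ n → Generates A c

/-- The range of `A` is exactly `n`: `[1,n]` generated but not `n+1`. -/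
def RangeIs (A : Finset ℕ) (n : ℕ) : Prop :=
  GeneratesUpTo A n ∧ ¬ Generates A (n + 1)

/-- The range of `A`: the largest `n` such that `A` generates all of `[1,n]`. -/
noncomputable def rangeOf (A : Finset ℕ) : ℕ :=
  sSup {n | GeneratesUpTo A n}

/-- `A` is admissible: it generates every integer in `[1, max A]`. -/
def Admissible (A : Finset ℕ) : Prop :=
  ∀ a ∈ A, ∀ c, 1 ≤ c → c ≤ a → Generates A c

/-- `A` is an addition chain: `1 ∈ A` and every larger element is the sum of
two (possibly equal) smaller elements of `A`. -/
def AdditionChain (A : Finset ℕ) : Prop :=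
  1 ∈ A ∧ ∀ a ∈ A, 1 < a → ∃ b ∈ A, ∃ c ∈ A, b < a ∧ c < a ∧ a = b + c

/-- The maximum range over k-element stamp bases. -/
noncomputable def maxBasisRange (k : ℕ) : ℕ :=
  sSup {n | ∃ A : Finset ℕ, (∀ a ∈ A, 0 < a) ∧ A.card = k ∧ GeneratesUpTo A n}

/-- The maximum range over k-element stamp chains. -/
noncomputable def maxChainRange (k : ℕ) : ℕ :=
  sSup {n | ∃ A : Finset ℕ, (∀ a ∈ A, 0 < a) ∧ AdditionChain A ∧ A.card = k ∧
    GeneratesUpTo A n}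

lemma generates_mono {A B : Finset ℕ} (h : A ⊆ B) {c : ℕ} :
    Generates A c → Generates B c := by
  rintro (h1 | ⟨a, ha, b, hb, rfl⟩)
  · exact Or.inl (h h1)
  · exact Or.inr ⟨a, h ha, b, h hb, rfl⟩

lemma generatesUpTo_mono {A B : Finset ℕ} (h : A ⊆ B) {n : ℕ} :
    GeneratesUpTo A n → GeneratesUpTo B n :=
  fun H c h1 h2 => generates_mono h (H c h1 h2)

lemma gen_bound {A : Finset ℕ} {n : ℕ} (h : GeneratesUpTo A n) :
    n ≤ A.card + A.card * A.card := by
  have hsub : Finset.Icc 1 n ⊆ A ∪ (A ×ˢ A).image (fun p => p.1 + p.2) := by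
    intro c hc
    simp only [Finset.mem_Icc] at hc
    rcases h c hc.1 hc.2 with h1 | ⟨a, ha, b, hb, rfl⟩
    · exact Finset.mem_union_left _ h1
    · exact Finset.mem_union_right _
        (Finset.mem_image.2 ⟨(a, b), Finset.mem_product.2 ⟨ha, hb⟩, rfl⟩)
  calc n = (Finset.Icc 1 n).card := by simp
    _ ≤ _ := Finset.card_le_card hsub
    _ ≤ A.card + ((A ×ˢ A).image (fun p => p.1 + p.2)).card := Finset.card_union_le _ _
    _ ≤ A.card + (A ×ˢ A).card := Nat.add_le_add_left Finset.card_image_le _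
    _ = _ := by rw [Finset.card_product]

lemma chain_to_basis {A : Finset ℕ} {n : ℕ} (hpos : ∀ a ∈ A, 0 < a)
    (hch : AdditionChain A) (hgen : GeneratesUpTo A (n + 2)) :
    ∃ B : Finset ℕ, (∀ b ∈ B, 0 < b) ∧ B.card = A.card - 1 ∧ GeneratesUpTo B n := by
  refine ⟨(A.erase 1).image (· - 1), ?_, ?_, ?_⟩
  · intro b hb
    simp only [Finset.mem_image, Finset.mem_erase] at hb
    obtain ⟨a, ⟨hne, ha⟩, rfl⟩ := hb
    have := hpos a ha
    omega
  · rw [Finset.card_image_of_injOn, Finset.card_erase_of_mem hch.1]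
    intro a ha b hb hab
    have ha' := Finset.mem_erase.1 (Finset.mem_coe.1 ha)
    have hb' := Finset.mem_erase.1 (Finset.mem_coe.1 hb)
    have := hpos a ha'.2; have := hpos b hb'.2
    simp only at hab
    omega
  · intro c hc1 hcn
    have key : ∃ x ∈ A, ∃ y ∈ A, c + 2 = x + y := by
      rcases hgen (c + 2) (by omega) (by omega) with h | ⟨x, hx, y, hy, hxy⟩
      · obtain ⟨x, hx, y, hy, _, _, hxy⟩ := hch.2 _ h (by omega)
        exact ⟨x, hx, y, hy, hxy⟩
      · exact ⟨x, hx, y, hy, hxy⟩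
    obtain ⟨x, hx, y, hy, hxy⟩ := key
    have hxp := hpos x hx; have hyp := hpos y hy
    have hmem : ∀ a ∈ A, 1 < a → a - 1 ∈ (A.erase 1).image (· - 1) := by
      intro a ha h1
      exact Finset.mem_image.2 ⟨a, Finset.mem_erase.2 ⟨by omega, ha⟩, rfl⟩
    rcases eq_or_lt_of_le (show 1 ≤ x from hxp) with hx1 | hx1
    · rcases eq_or_lt_of_le (show 1 ≤ y from hyp) with hy1 | hy1
      · omega
      · exact Or.inl (by have := hmem y hy hy1; rwa [show y - 1 = c by omega] at this)
    · rcases eq_or_lt_of_le (show 1 ≤ y from hyp) with hy1 | hy1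
      · exact Or.inl (by have := hmem x hx hx1; rwa [show x - 1 = c by omega] at this)
      · exact Or.inr ⟨x - 1, hmem x hx hx1, y - 1, hmem y hy hy1, by omega⟩

lemma pad {A : Finset ℕ} (hpos : ∀ a ∈ A, 0 < a) (hch : AdditionChain A) (j : ℕ) :
    ∃ A' : Finset ℕ, A ⊆ A' ∧ (∀ a ∈ A', 0 < a) ∧ AdditionChain A' ∧
      A'.card = A.card + j := by
  induction j with
  | zero => exact ⟨A, le_refl _, hpos, hch, rfl⟩
  | succ j ih =>
    obtain ⟨A', hsub, hpos', hch', hcard⟩ := ih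
    have hne : A'.Nonempty := ⟨1, hch'.1⟩
    set M := A'.max' hne with hM
    have hM1 : 1 ≤ M := A'.le_max' 1 hch'.1
    have hMA : M ∈ A' := A'.max'_mem hne
    have hnot : M + M ∉ A' := fun h => by have := A'.le_max' _ h; omega
    refine ⟨insert (M + M) A', hsub.trans (Finset.subset_insert _ _), ?_, ⟨?_, ?_⟩, ?_⟩
    · intro a ha
      rcases Finset.mem_insert.1 ha with rfl | h
      · omega
      · exact hpos' a h
    · exact Finset.mem_insert_of_mem hch'.1
    · intro a ha h1
      rcases Finset.mem_insert.1 ha with rfl | h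
      · exact ⟨M, Finset.mem_insert_of_mem hMA, M, Finset.mem_insert_of_mem hMA,
          by omega, by omega, rfl⟩
      · obtain ⟨b, hb, c, hc, h⟩ := hch'.2 a h h1
        exact ⟨b, Finset.mem_insert_of_mem hb, c, Finset.mem_insert_of_mem hc, h⟩
    · rw [Finset.card_insert_of_notMem hnot, hcard]; omega

lemma basis_to_chain {B : Finset ℕ} {m : ℕ} (hpos : ∀ a ∈ B, 0 < a)
    (hgen : GeneratesUpTo B m) :
    ∃ A : Finset ℕ, (∀ a ∈ A, 0 < a) ∧ AdditionChain A ∧ A.card ≤ B.card + 1 ∧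
      GeneratesUpTo A (m + 2) := by
  classical
  set B0 : Finset ℕ := B.filter (· ≤ m + 1) with hB0
  have hB0sub : B0 ⊆ B := Finset.filter_subset _ _
  have hB0pos : ∀ a ∈ B0, 0 < a := fun a ha => hpos a (hB0sub ha)
  have hB0le : ∀ a ∈ B0, a ≤ m + 1 := fun a ha => by
    have := (Finset.mem_filter.1 ha).2; simpa using this
  -- B0 still generates [1, m]
  have hgen0 : GeneratesUpTo B0 m := by
    intro c hc1 hcm
    rcases hgen c hc1 hcm with h | ⟨x, hx, y, hy, hxy⟩
    · exact Or.inl (Finset.mem_filter.2 ⟨h, by omega⟩)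
    · have hxp := hpos x hx; have hyp := hpos y hy
      exact Or.inr ⟨x, Finset.mem_filter.2 ⟨hx, by omega⟩,
        y, Finset.mem_filter.2 ⟨hy, by omega⟩, hxy⟩
  set A : Finset ℕ := insert 1 (B0.image (· + 1)) with hA
  have hmemA : ∀ b ∈ B0, b + 1 ∈ A := fun b hb =>
    Finset.mem_insert_of_mem (Finset.mem_image.2 ⟨b, hb, rfl⟩)
  have h1A : 1 ∈ A := Finset.mem_insert_self _ _
  refine ⟨A, ?_, ⟨h1A, ?_⟩, ?_, ?_⟩
  · intro a ha
    rcases Finset.mem_insert.1 ha with rfl | h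
    · omega
    · obtain ⟨b, _, rfl⟩ := Finset.mem_image.1 h; omega
  · -- chain property
    intro a ha h1
    rcases Finset.mem_insert.1 ha with rfl | h
    · omega
    obtain ⟨b, hb, rfl⟩ := Finset.mem_image.1 h
    have hbp := hB0pos b hb
    rcases eq_or_lt_of_le (show 1 ≤ b from hbp) with hb1 | hb1
    · exact ⟨1, h1A, 1, h1A, by omega, by omega, by omega⟩
    · have hbm : b - 1 ≤ m := by have := hB0le b hb; omega
      rcases hgen0 (b - 1) (by omega) hbm with hmem | ⟨x, hx, y, hy, hxy⟩
      · refine ⟨1, h1A, b, ?_, by omega, by omega, by omega⟩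
        have := hmemA (b - 1) hmem
        rwa [show b - 1 + 1 = b by omega] at this
      · have hxp := hB0pos x hx; have hyp := hB0pos y hy
        exact ⟨x + 1, hmemA x hx, y + 1, hmemA y hy, by omega, by omega, by omega⟩
  · -- cardinality
    calc A.card ≤ (B0.image (· + 1)).card + 1 := Finset.card_insert_le _ _
      _ ≤ B0.card + 1 := Nat.add_le_add_right Finset.card_image_le 1
      _ ≤ B.card + 1 := by gcongr
  · -- generates up to m + 2
    intro c hc1 hcm
    rcases Nat.lt_or_ge c 3 with hc3 | hc3
    · interval_cases c
      · exact Or.inl h1A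
      · exact Or.inr ⟨1, h1A, 1, h1A, rfl⟩
    · have h2m : c - 2 ≤ m := by omega
      rcases hgen0 (c - 2) (by omega) h2m with hmem | ⟨x, hx, y, hy, hxy⟩
      · exact Or.inr ⟨1, h1A, c - 2 + 1, hmemA _ hmem, by omega⟩
      · have hxp := hB0pos x hx; have hyp := hB0pos y hy
        exact Or.inr ⟨x + 1, hmemA x hx, y + 1, hmemA y hy, by omega⟩

/-- For every k > 1, n̄(k) = n(k-1) + 2. -/
theorem maxChainRange_eq (k : ℕ) (hk : 1 < k) :
    maxChainRange k = maxBasisRange (k - 1) + 2 := by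
  classical
  set Sb := {n | ∃ A : Finset ℕ, (∀ a ∈ A, 0 < a) ∧ A.card = k - 1 ∧ GeneratesUpTo A n}
    with hSb
  set Sc := {n | ∃ A : Finset ℕ, (∀ a ∈ A, 0 < a) ∧ AdditionChain A ∧ A.card = k ∧
    GeneratesUpTo A n} with hSc
  have hSbB : BddAbove Sb := by
    refine ⟨(k - 1) + (k - 1) * (k - 1), ?_⟩
    rintro n ⟨A, _, hc, hg⟩
    have := gen_bound hg
    rwa [hc] at this
  have hScB : BddAbove Sc := by
    refine ⟨k + k * k, ?_⟩
    rintro n ⟨A, _, _, hc, hg⟩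
    have := gen_bound hg
    rwa [hc] at this
  have h2Sb : 2 ∈ Sb := by
    refine ⟨Finset.Icc 1 (k - 1), ?_, ?_, ?_⟩
    · intro a ha
      have := (Finset.mem_Icc.1 ha).1
      omega
    · rw [Nat.card_Icc]; omega
    · intro c hc1 hc2
      have h1 : (1 : ℕ) ∈ Finset.Icc 1 (k - 1) := Finset.mem_Icc.2 ⟨le_rfl, by omega⟩
      interval_cases c
      · exact Or.inl h1
      · exact Or.inr ⟨1, h1, 1, h1, rfl⟩
  have hSbne : Sb.Nonempty := ⟨2, h2Sb⟩
  have hmdef : maxBasisRange (k - 1) = sSup Sb := rfl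
  have hmmem : maxBasisRange (k - 1) ∈ Sb := by
    rw [hmdef]; exact Nat.sSup_mem hSbne hSbB
  have hm2 : 2 ≤ maxBasisRange (k - 1) := by
    rw [hmdef]; exact le_csSup hSbB h2Sb
  set m := maxBasisRange (k - 1) with hm
  obtain ⟨B, hBpos, hBcard, hBgen⟩ := hmmem
  obtain ⟨A0, hA0pos, hA0ch, hA0card, hA0gen⟩ := basis_to_chain hBpos hBgen
  obtain ⟨A, hsub, hApos, hAch, hAcard⟩ := pad hA0pos hA0ch (k - A0.card)
  have hA0le : A0.card ≤ k := by omega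
  have hAk : A.card = k := by omega
  have hmem : m + 2 ∈ Sc := ⟨A, hApos, hAch, hAk, generatesUpTo_mono hsub hA0gen⟩
  have hcdef : maxChainRange k = sSup Sc := rfl
  apply le_antisymm
  · rw [hcdef]
    apply csSup_le ⟨m + 2, hmem⟩
    rintro n ⟨A', hpos', hch', hcard', hgen'⟩
    rcases Nat.lt_or_ge n 3 with h3 | h3
    · omega
    · have : GeneratesUpTo A' ((n - 2) + 2) := by
        rwa [show n - 2 + 2 = n by omega]
      obtain ⟨B', hB'pos, hB'card, hB'gen⟩ := chain_to_basis hpos' hch' this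
      have : n - 2 ∈ Sb := ⟨B', hB'pos, by omega, hB'gen⟩
      have hle : n - 2 ≤ m := hmdef ▸ le_csSup hSbB this
      omega
  · rw [hcdef]
    exact le_csSup hScB hmem
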